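/- Let M be a von Neumann algebra on a complex Hilbert space H, let G be a topological group, and let β : G → (M → M) be a group homomorphism into *-algebra automorphisms of M such that for each x ∈ M the orbit map g ↦ β_g(x) is WOT-continuous. Let P : M → M be a completely contractive linear idempotent (with M regarded as a C*-algebra) satisfying β_g ∘ P = P ∘ β_g for every g ∈ G. Set X := P(M) and {a,b,c} := P(a b* c) for a, b, c ∈ X. Then for every g ∈ G: β_g(X) = X, and β_g({a,b,c}) = {β_g(a), β_g(b), β_g(c)} for all a,b,c ∈ X. Consequently α_g := β_g|_X defines an action of G on the TRO (X, {·,·,·}) by surjective linear isometries preserving the ternary product, and for each x ∈ X the orbit map g ↦ α_g(x) is WOT-continuous. -/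

import Mathlib

open Filter Topology

noncomputable section

variable {H : Type*} [NormedAddCommGroup H] [InnerProductSpace ℂ H] [CompleteSpace H]

/-- A C*-norm on a complex `*`-algebra: a submultiplicative norm satisfying the C*-identity.
On the matrix algebra `Mₙ(B(H))` such a norm is unique and coincides with the canonical
C*-norm, so quantifying over all such norms faithfully expresses the matrix norm condition. -/
def IsCStarNorm {B : Type*} [NonUnitalRing B] [StarRing B] [Module ℂ B] (N : B → ℝ) : Prop :=
  (∀ x, 0 ≤ N x) ∧ (∀ x, N x = 0 ↔ x = 0) ∧ (∀ x y, N (x + y) ≤ N x + N y) ∧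
    (∀ (c : ℂ) (x), N (c • x) = ‖c‖ * N x) ∧ (∀ x y, N (x * y) ≤ N x * N y) ∧
    (∀ x, N (star x * x) = N x * N x)

/-- A map `P` is completely contractive on a subset `S` of `B(H)` if all of its entrywise
amplifications to matrices with entries in `S` are contractive for the matrix C*-norm. -/
def CompletelyContractiveOn (S : Set (H →L[ℂ] H)) (P : (H →L[ℂ] H) → (H →L[ℂ] H)) : Prop :=
  ∀ (n : ℕ) (N : Matrix (Fin n) (Fin n) (H →L[ℂ] H) → ℝ), IsCStarNorm N →
    ∀ T : Matrix (Fin n) (Fin n) (H →L[ℂ] H), (∀ i j, T i j ∈ S) →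
      N (Matrix.of fun i j => P (T i j)) ≤ N T

lemma isClosed_centralizer' {H : Type*} [NormedAddCommGroup H] [InnerProductSpace ℂ H]
    [CompleteSpace H] (s : Set (H →L[ℂ] H)) : IsClosed (Set.centralizer s) := by
  have h : Set.centralizer s = ⋂ a ∈ s, {x : H →L[ℂ] H | a * x = x * a} := by
    ext x
    simp [Set.mem_centralizer_iff, Set.mem_iInter]
  rw [h]
  exact isClosed_biInter fun a _ =>
    isClosed_eq (continuous_const.mul continuous_id) (continuous_id.mul continuous_const)

instance {H : Type*} [NormedAddCommGroup H] [InnerProductSpace ℂ H] [CompleteSpace H] :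
    SMulMemClass (VonNeumannAlgebra H) ℂ (H →L[ℂ] H) :=
  ⟨fun {s} c a ha => s.toStarSubalgebra.smul_mem ha c⟩

/-- A WOT-continuous action of a group on a von Neumann algebra commuting with a completely
contractive idempotent `P` induces an action on the TRO `X = P(M)` with ternary product
`{a,b,c} = P(a b* c)`, by surjective isometries preserving the ternary product,
with WOT-continuous orbit maps. -/
theorem action_restricts_to_fixed_TRO
    {G : Type*} [Group G] [TopologicalSpace G] [IsTopologicalGroup G]
    (M : VonNeumannAlgebra H)
    (β : G → (H →L[ℂ] H) → (H →L[ℂ] H))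
    (hbij : ∀ g : G, Set.BijOn (β g) (M : Set (H →L[ℂ] H)) (M : Set (H →L[ℂ] H)))
    (hadd : ∀ g : G, ∀ x ∈ M, ∀ y ∈ M, β g (x + y) = β g x + β g y)
    (hsmul : ∀ g : G, ∀ (c : ℂ), ∀ x ∈ M, β g (c • x) = c • β g x)
    (hmul : ∀ g : G, ∀ x ∈ M, ∀ y ∈ M, β g (x * y) = β g x * β g y)
    (hstar : ∀ g : G, ∀ x ∈ M, β g (star x) = star (β g x))
    (hhom : ∀ g h : G, ∀ x ∈ M, β (g * h) x = β g (β h x))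
    (hone : ∀ x ∈ M, β (1 : G) x = x)
    (hcont : ∀ x ∈ M, Continuous fun g : G => (ContinuousLinearMapWOT.ofCLM (β g x) : H →WOT[ℂ] H))
    (P : (H →L[ℂ] H) → (H →L[ℂ] H))
    (hPmem : ∀ x ∈ M, P x ∈ M)
    (hPadd : ∀ x ∈ M, ∀ y ∈ M, P (x + y) = P x + P y)
    (hPsmul : ∀ (c : ℂ), ∀ x ∈ M, P (c • x) = c • P x)
    (hPidem : ∀ x ∈ M, P (P x) = P x)
    (hPcc : CompletelyContractiveOn (M : Set (H →L[ℂ] H)) P)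
    (hcomm : ∀ g : G, ∀ x ∈ M, β g (P x) = P (β g x))
    (X : Set (H →L[ℂ] H)) (hX : X = {y | ∃ x ∈ M, P x = y}) :
    -- each β g maps X onto X
    (∀ g : G, β g '' X = X) ∧
    -- β g preserves the ternary product {a,b,c} = P (a b* c)
    (∀ g : G, ∀ a ∈ X, ∀ b ∈ X, ∀ c ∈ X,
      β g (P (a * star b * c)) = P (β g a * star (β g b) * β g c)) ∧
    -- each β g is isometric on X
    (∀ g : G, ∀ x ∈ X, ‖β g x‖ = ‖x‖) ∧
    -- the restricted maps form an action of G on X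
    (∀ g h : G, ∀ x ∈ X, β (g * h) x = β g (β h x)) ∧
    (∀ x ∈ X, β (1 : G) x = x) ∧
    -- the orbit maps are WOT-continuous on X
    (∀ x ∈ X, Continuous fun g : G => (ContinuousLinearMapWOT.ofCLM (β g x) : H →WOT[ℂ] H)) := by

  have hXM : X ⊆ (M : Set (H →L[ℂ] H)) := by
    intro y hy
    rw [hX] at hy
    obtain ⟨x, hx, rfl⟩ := hy
    exact hPmem x hx
  have hPX : ∀ y ∈ X, P y = y := by
    intro y hy
    rw [hX] at hy
    obtain ⟨x, hx, rfl⟩ := hy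
    exact hPidem x hx
  have hmemX : ∀ y, y ∈ M → P y = y → y ∈ X := by
    intro y hy hPy
    rw [hX]
    exact ⟨y, hy, hPy⟩
  have hinv : ∀ g : G, ∀ y ∈ M, β g (β g⁻¹ y) = y := by
    intro g y hy
    rw [← hhom g g⁻¹ y hy, mul_inv_cancel]
    exact hone y hy
  have hinvmem : ∀ g : G, ∀ y ∈ M, β g⁻¹ y ∈ M := fun g y hy => (hbij g⁻¹).mapsTo hy
  have hmaps : ∀ g : G, β g '' X = X := by
    intro g
    apply Set.Subset.antisymm
    · rintro _ ⟨y, hy, rfl⟩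
      have hyM := hXM hy
      refine hmemX _ ((hbij g).mapsTo hyM) ?_
      rw [← hcomm g y hyM, hPX y hy]
    · intro y hy
      have hyM := hXM hy
      refine ⟨β g⁻¹ y, ?_, hinv g y hyM⟩
      refine hmemX _ (hinvmem g y hyM) ?_
      rw [← hcomm g⁻¹ y hyM, hPX y hy]
  have hMclosed : IsClosed (M : Set (H →L[ℂ] H)) := by
    rw [← M.centralizer_centralizer]
    exact isClosed_centralizer' _
  refine ⟨hmaps, ?_, ?_, ?_, ?_, ?_⟩
  · intro g a ha b hb c hc
    have haM := hXM ha; have hbM := hXM hb; have hcM := hXM hc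
    have habcM : a * star b * c ∈ M := mul_mem (mul_mem haM (star_mem hbM)) hcM
    rw [hcomm g _ habcM, hmul g _ (mul_mem haM (star_mem hbM)) c hcM,
      hmul g a haM _ (star_mem hbM), hstar g b hbM]
  · intro g x hx
    have hxM := hXM hx
    haveI : IsClosed ((M : Set (H →L[ℂ] H))) := hMclosed
    let e : M ≃⋆ₐ[ℂ] M :=
      { toFun := fun y => ⟨β g y, (hbij g).mapsTo y.2⟩
        invFun := fun y => ⟨β g⁻¹ y, hinvmem g y y.2⟩
        left_inv := by
          rintro ⟨y, hy⟩
          refine Subtype.ext ?_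
          show β g⁻¹ (β g y) = y
          rw [← hhom g⁻¹ g y hy, inv_mul_cancel]
          exact hone y hy
        right_inv := by
          rintro ⟨y, hy⟩
          exact Subtype.ext (hinv g y hy)
        map_mul' := by
          rintro ⟨a, haa⟩ ⟨b, hbb⟩
          exact Subtype.ext (hmul g a haa b hbb)
        map_add' := by
          rintro ⟨a, haa⟩ ⟨b, hbb⟩
          exact Subtype.ext (hadd g a haa b hbb)
        map_star' := by
          rintro ⟨a, haa⟩
          exact Subtype.ext (hstar g a haa)
        map_smul' := by
          rintro r ⟨a, haa⟩
          exact Subtype.ext (hsmul g r a haa) }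
    exact StarAlgEquiv.norm_map e ⟨x, hxM⟩
  · intro g h x hx
    exact hhom g h x (hXM hx)
  · intro x hx
    exact hone x (hXM hx)
  · intro x hx
    exact hcont x (hXM hx)


end
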